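/- arXiv:math/9411235 — 4 statements merged into one kernel-verified Lean document; each statement's English description precedes it below -/
import Mathlib

section
/- Let F be a finite directed graph and v a vertex of F. For integers 1 ≤ k < r, for every k-variable first-order formula φ(x₁,…,x_l) in the language of one binary relation (edge relation), and for all elements a₁,…,a_l of F other than v (viewed as common elements of F_k and F_r), we have F_k ⊨ φ(a₁,…,a_l) if and only if F_r ⊨ φ(a₁,…,a_l). In particular F_k and F_r satisfy the same k-variable first-order sentences. -/
/-!
STATEMENT 0.  Clique-replacement lemma (first-order, `k`-variable instance).

`GFml k` is the syntax of first-order formulas in the language of one binary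
(edge) relation that use at most `k` distinct individual variables; variables
may be reused, and quantifiers rebind one of the `k` variable slots.  An
assignment is a map `Fin k → V`; satisfaction of a formula under an assignment
determines in particular the truth of `φ(a₁,…,a_l)` whenever the free variables
of `φ` are assigned the parameters `a₁,…,a_l`.
-/

/-- `k`-variable first-order formulas over one binary relation symbol. -/
inductive GFml (k : ℕ) : Type
  | eq   : Fin k → Fin k → GFml k
  | edge : Fin k → Fin k → GFml k
  | not  : GFml k → GFml k
  | and  : GFml k → GFml k → GFml k
  | ex   : Fin k → GFml k → GFml k

namespace GFml

/-- Satisfaction of a `k`-variable formula in a directed graph `(V, E)`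
under an assignment of the `k` variables. -/
def Sat {k : ℕ} {V : Type} (E : V → V → Prop) : GFml k → (Fin k → V) → Prop
  | eq i j, v => v i = v j
  | edge i j, v => E (v i) (v j)
  | not φ, v => ¬ Sat E φ v
  | and φ ψ, v => Sat E φ v ∧ Sat E ψ v
  | ex i φ, v => ∃ a : V, Sat E φ (Function.update v i a)

/-- The free variables of a formula. -/
def free {k : ℕ} : GFml k → Finset (Fin k)
  | eq i j => {i, j}
  | edge i j => {i, j}
  | not φ => free φ
  | and φ ψ => free φ ∪ free ψ
  | ex i φ => (free φ).erase i

end GFml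

/-- The graph `F_i` obtained from the directed graph `F = (V, E)` by replacing
the vertex `v` with a clique of `i` new vertices: every ordered pair of distinct
new vertices is an edge, each edge `(v,w)` of `F` is replaced by the edges from
every new vertex to `w`, and each edge `(z,v)` by the edges from `z` to every
new vertex. -/
def blowup {V : Type} (E : V → V → Prop) (v : V) (i : ℕ) :
    ({x : V // x ≠ v} ⊕ Fin i) → ({x : V // x ≠ v} ⊕ Fin i) → Prop
  | Sum.inl x, Sum.inl y => E x.1 y.1
  | Sum.inl x, Sum.inr _ => E x.1 v
  | Sum.inr _, Sum.inl y => E v y.1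
  | Sum.inr a, Sum.inr b => a ≠ b


section Aux

variable {W : Type} {k : ℕ}

/-- The back-and-forth invariant between assignments into two blowups. -/
def BRel {m n : ℕ} (w : Fin k → W ⊕ Fin m) (w' : Fin k → W ⊕ Fin n) : Prop :=
  (∀ i, (∃ x, w i = Sum.inl x ∧ w' i = Sum.inl x) ∨
        (∃ b b', w i = Sum.inr b ∧ w' i = Sum.inr b')) ∧
  (∀ i j, w i = w j ↔ w' i = w' j)

lemma BRel.symm {m n : ℕ} {w : Fin k → W ⊕ Fin m} {w' : Fin k → W ⊕ Fin n}
    (h : BRel w w') : BRel w' w := by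
  obtain ⟨h1, h2⟩ := h
  refine ⟨fun i => ?_, fun i j => (h2 i j).symm⟩
  rcases h1 i with ⟨x, hx, hx'⟩ | ⟨b, b', hb, hb'⟩
  · exact Or.inl ⟨x, hx', hx⟩
  · exact Or.inr ⟨b', b, hb', hb⟩

/-- Extension step: the Duplicator can answer any move. -/
lemma BRel.ext {m n : ℕ} (hn : k ≤ n) {w : Fin k → W ⊕ Fin m} {w' : Fin k → W ⊕ Fin n}
    (h : BRel w w') (i : Fin k) (a : W ⊕ Fin m) :
    ∃ a', BRel (Function.update w i a) (Function.update w' i a') := by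
  obtain ⟨h1, h2⟩ := h
  have key : ∀ a' : W ⊕ Fin n,
      ((∃ x, a = Sum.inl x ∧ a' = Sum.inl x) ∨ (∃ b b', a = Sum.inr b ∧ a' = Sum.inr b')) →
      (∀ j, j ≠ i → (w j = a ↔ w' j = a')) →
      BRel (Function.update w i a) (Function.update w' i a') := by
    intro a' hcomp hmatch
    constructor
    · intro j
      by_cases hj : j = i
      · subst hj; simpa using hcomp
      · simpa [Function.update_of_ne hj] using h1 j
    · intro j1 j2
      by_cases hj1 : j1 = i <;> by_cases hj2 : j2 = i
      · subst hj1; subst hj2; simp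
      · subst hj1
        simp only [Function.update_self, Function.update_of_ne hj2]
        constructor
        · intro hh; exact (hmatch j2 hj2).1 hh.symm |>.symm
        · intro hh; exact (hmatch j2 hj2).2 hh.symm |>.symm
      · subst hj2
        simp only [Function.update_self, Function.update_of_ne hj1]
        exact hmatch j1 hj1
      · simp only [Function.update_of_ne hj1, Function.update_of_ne hj2]
        exact h2 j1 j2
  rcases a with x | b
  · refine ⟨Sum.inl x, key _ (Or.inl ⟨x, rfl, rfl⟩) ?_⟩
    intro j hj
    rcases h1 j with ⟨y, hy, hy'⟩ | ⟨c, c', hc, hc'⟩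
    · rw [hy, hy']; simp
    · rw [hc, hc']; simp
  · by_cases hex : ∃ j, j ≠ i ∧ w j = Sum.inr b
    · obtain ⟨j0, hj0i, hj0⟩ := hex
      rcases h1 j0 with ⟨y, hy, _⟩ | ⟨c, c', hc, hc'⟩
      · rw [hy] at hj0; exact absurd hj0 (by simp)
      · rw [hc] at hj0
        have hcb : c = b := Sum.inr.inj hj0
        subst hcb
        refine ⟨Sum.inr c', key _ (Or.inr ⟨c, c', rfl, rfl⟩) ?_⟩
        intro j hj
        rw [← hc, ← hc']
        exact h2 j j0
    · push_neg at hex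
      -- find a fresh clique vertex in `Fin n`
      have hn0 : 0 < n := i.pos.trans_le hn
      have hfresh : ∃ b' : Fin n, ∀ j, j ≠ i → w' j ≠ Sum.inr b' := by
        let f : Fin k → Fin n := fun j => Sum.elim (fun _ => ⟨0, hn0⟩) id (w' j)
        by_contra hcon
        push_neg at hcon
        have hsub : (Finset.univ : Finset (Fin n)) ⊆ (Finset.univ.erase i).image f := by
          intro b' _
          obtain ⟨j, hji, hj⟩ := hcon b'
          refine Finset.mem_image.2 ⟨j, Finset.mem_erase.2 ⟨hji, Finset.mem_univ j⟩, ?_⟩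
          simp [f, hj]
        have h3 := Finset.card_le_card hsub
        have h4 := Finset.card_image_le (s := Finset.univ.erase i) (f := f)
        have h5 : (Finset.univ.erase i).card = k - 1 := by
          rw [Finset.card_erase_of_mem (Finset.mem_univ i)]; simp
        have hk1 : 1 ≤ k := i.pos
        simp [Finset.card_univ, h5] at h3 h4
        omega
      obtain ⟨b', hb'⟩ := hfresh
      refine ⟨Sum.inr b', key _ (Or.inr ⟨b, b', rfl, rfl⟩) ?_⟩
      intro j hj
      constructor
      · intro hh; exact absurd hh (hex j hj)
      · intro hh; exact absurd hh (hb' j hj)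

end Aux

section Main

variable {V : Type} (E : V → V → Prop) (v : V)

lemma sat_iff_of_brel {k : ℕ} {m n : ℕ} (hm : k ≤ m) (hn : k ≤ n) (φ : GFml k) :
    ∀ (w : Fin k → {x : V // x ≠ v} ⊕ Fin m) (w' : Fin k → {x : V // x ≠ v} ⊕ Fin n),
      BRel w w' → (GFml.Sat (blowup E v m) φ w ↔ GFml.Sat (blowup E v n) φ w') := by
  induction φ with
  | eq i j =>
    intro w w' h
    exact h.2 i j
  | edge i j =>
    intro w w' h
    obtain ⟨h1, h2⟩ := h
    show blowup E v m (w i) (w j) ↔ blowup E v n (w' i) (w' j)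
    rcases h1 i with ⟨x, hx, hx'⟩ | ⟨b, b', hb, hb'⟩ <;>
      rcases h1 j with ⟨y, hy, hy'⟩ | ⟨c, c', hc, hc'⟩
    · rw [hx, hx', hy, hy']; exact Iff.rfl
    · rw [hx, hx', hc, hc']; exact Iff.rfl
    · rw [hb, hb', hy, hy']; exact Iff.rfl
    · rw [hb, hb', hc, hc']
      show b ≠ c ↔ b' ≠ c'
      have := h2 i j
      rw [hb, hc, hb', hc'] at this
      simp only [Sum.inr.injEq] at this
      exact not_congr this
  | not φ ih =>
    intro w w' h
    exact not_congr (ih w w' h)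
  | and φ ψ ih1 ih2 =>
    intro w w' h
    exact and_congr (ih1 w w' h) (ih2 w w' h)
  | ex i φ ih =>
    intro w w' h
    constructor
    · rintro ⟨a, ha⟩
      obtain ⟨a', ha'⟩ := h.ext hn i a
      exact ⟨a', (ih _ _ ha').1 ha⟩
    · rintro ⟨a', ha'⟩
      obtain ⟨a, ha⟩ := h.symm.ext hm i a'
      exact ⟨a, (ih _ _ ha.symm).2 ha'⟩

lemma sat_congr_free {k : ℕ} {W : Type} (Ed : W → W → Prop) (φ : GFml k) :
    ∀ (w w₂ : Fin k → W), (∀ i ∈ φ.free, w i = w₂ i) →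
      (GFml.Sat Ed φ w ↔ GFml.Sat Ed φ w₂) := by
  induction φ with
  | eq i j =>
    intro w w₂ h
    have hi := h i (by simp [GFml.free])
    have hj := h j (by simp [GFml.free])
    show w i = w j ↔ w₂ i = w₂ j
    rw [hi, hj]
  | edge i j =>
    intro w w₂ h
    have hi := h i (by simp [GFml.free])
    have hj := h j (by simp [GFml.free])
    show Ed (w i) (w j) ↔ Ed (w₂ i) (w₂ j)
    rw [hi, hj]
  | not φ ih =>
    intro w w₂ h
    exact not_congr (ih w w₂ h)
  | and φ ψ ih1 ih2 =>
    intro w w₂ h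
    exact and_congr (ih1 w w₂ fun i hi => h i (Finset.mem_union_left _ hi))
      (ih2 w w₂ fun i hi => h i (Finset.mem_union_right _ hi))
  | ex i φ ih =>
    intro w w₂ h
    constructor
    · rintro ⟨a, ha⟩
      refine ⟨a, (ih _ _ ?_).1 ha⟩
      intro j hj
      by_cases hji : j = i
      · subst hji; simp
      · rw [Function.update_of_ne hji, Function.update_of_ne hji]
        exact h j (Finset.mem_erase.2 ⟨hji, hj⟩)
    · rintro ⟨a, ha⟩
      refine ⟨a, (ih _ _ ?_).2 ha⟩
      intro j hj
      by_cases hji : j = i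
      · subst hji; simp
      · rw [Function.update_of_ne hji, Function.update_of_ne hji]
        exact h j (Finset.mem_erase.2 ⟨hji, hj⟩)

end Main

/-- For `1 ≤ k < r`, every `k`-variable first-order formula evaluated at
parameters other than `v` (common to `F_k` and `F_r`) has the same truth value
in `F_k` and in `F_r`; in particular `F_k` and `F_r` satisfy the same
`k`-variable first-order sentences. -/
theorem clique_replacement {V : Type} [Fintype V] (E : V → V → Prop) (v : V)
    (k r : ℕ) (hk : 1 ≤ k) (hkr : k < r) :
    (∀ (φ : GFml k) (w : Fin k → {x : V // x ≠ v}),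
        GFml.Sat (blowup E v k) φ (fun i => Sum.inl (w i)) ↔
          GFml.Sat (blowup E v r) φ (fun i => Sum.inl (w i))) ∧
    (∀ φ : GFml k, φ.free = ∅ →
        ∀ (w : Fin k → ({x : V // x ≠ v} ⊕ Fin k))
          (w' : Fin k → ({x : V // x ≠ v} ⊕ Fin r)),
          GFml.Sat (blowup E v k) φ w ↔ GFml.Sat (blowup E v r) φ w') := by
  have hkr' : k ≤ r := le_of_lt hkr
  constructor
  · intro φ w
    refine sat_iff_of_brel E v le_rfl hkr' φ _ _ ⟨fun i => Or.inl ⟨w i, rfl, rfl⟩, fun i j => by simp⟩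
  · intro φ hfree w w'
    have hk0 : 0 < k := hk
    have hr0 : 0 < r := lt_of_lt_of_le hk0 hkr'
    let w0 : Fin k → {x : V // x ≠ v} ⊕ Fin k := fun _ => Sum.inr ⟨0, hk0⟩
    let w0' : Fin k → {x : V // x ≠ v} ⊕ Fin r := fun _ => Sum.inr ⟨0, hr0⟩
    have hrel : BRel w0 w0' := ⟨fun i => Or.inr ⟨_, _, rfl, rfl⟩, fun i j => by simp [w0, w0']⟩
    have h1 : GFml.Sat (blowup E v k) φ w ↔ GFml.Sat (blowup E v k) φ w0 :=
      sat_congr_free _ φ w w0 (by simp [hfree])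
    have h2 : GFml.Sat (blowup E v r) φ w0' ↔ GFml.Sat (blowup E v r) φ w' :=
      sat_congr_free _ φ w0' w' (by simp [hfree])
    rw [h1, ← h2]
    exact sat_iff_of_brel E v le_rfl hkr' φ w0 w0' hrel
end

section
/- Let F be a finite directed graph and w₁,…,w_t distinct vertices of F. For a vector s = (s₁,…,s_t) of positive integers, let F_s denote the graph obtained from F by simultaneously replacing each w_j with a clique of s_j new vertices, each edge into or out of w_j being replaced by the corresponding edges into or out of every new vertex of that clique. If k ≤ s_j and k ≤ s′_j for every j = 1,…,t, then for every k-variable first-order formula φ(x₁,…,x_l) in the language of one binary relation and all elements a₁,…,a_l of F not among w₁,…,w_t, F_s ⊨ φ(a₁,…,a_l) if and only if F_{s′} ⊨ φ(a₁,…,a_l). -/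
/-- The graph `F_s` obtained from the directed graph `F = (V, E)` by
simultaneously replacing each vertex `w j` with a clique of `s j` new vertices;
each edge into or out of `w j` is replaced by the corresponding edges into or
out of every new vertex of that clique, and every ordered pair of distinct new
vertices of the same clique is an edge. -/
def mblowup {V : Type} (E : V → V → Prop) {t : ℕ} (w : Fin t → V)
    (s : Fin t → ℕ) :
    ({x : V // ∀ j, x ≠ w j} ⊕ (Σ j : Fin t, Fin (s j))) →
    ({x : V // ∀ j, x ≠ w j} ⊕ (Σ j : Fin t, Fin (s j))) → Prop
  | Sum.inl x, Sum.inl y => E x.1 y.1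
  | Sum.inl x, Sum.inr q => E x.1 (w q.1)
  | Sum.inr q, Sum.inl y => E (w q.1) y.1
  | Sum.inr q, Sum.inr q' => if q.1 = q'.1 then q ≠ q' else E (w q.1) (w q'.1)

section Aux

variable {V : Type} {t : ℕ}

/-- The vertex type of the blowup. -/
abbrev MB (V : Type) {t : ℕ} (w : Fin t → V) (s : Fin t → ℕ) : Type :=
  {x : V // ∀ j, x ≠ w j} ⊕ (Σ j : Fin t, Fin (s j))

/-- Correspondence between elements of two blowups: equal old vertices, or new
vertices belonging to the same clique. -/
def MCorr {w : Fin t → V} {s s' : Fin t → ℕ} : MB V w s → MB V w s' → Prop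
  | Sum.inl x, Sum.inl y => x = y
  | Sum.inr q, Sum.inr q' => q.1 = q'.1
  | _, _ => False

lemma mcorr_symm {w : Fin t → V} {s s' : Fin t → ℕ} {a : MB V w s}
    {b : MB V w s'} (h : MCorr a b) : MCorr b a := by
  rcases a with x | q <;> rcases b with y | p <;>
    simp only [MCorr] at h ⊢ <;> exact h.symm

lemma mcorr_update {w : Fin t → V} {s s' : Fin t → ℕ} {k : ℕ}
    {v : Fin k → MB V w s} {v' : Fin k → MB V w s'}
    (hcorr : ∀ i, MCorr (v i) (v' i)) (i : Fin k)
    {a : MB V w s} {a' : MB V w s'} (ha : MCorr a a') :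
    ∀ i1, MCorr (Function.update v i a i1) (Function.update v' i a' i1) := by
  intro i1
  rcases eq_or_ne i1 i with rfl | h1
  · simpa using ha
  · simpa [Function.update_of_ne h1] using hcorr i1

lemma eqpat_update {α β : Type} {k : ℕ} {v : Fin k → α} {v' : Fin k → β}
    (heq : ∀ i1 i2, v i1 = v i2 ↔ v' i1 = v' i2) (i : Fin k)
    {a : α} {a' : β} (hfresh : ∀ i2, i2 ≠ i → (a = v i2 ↔ a' = v' i2)) :
    ∀ i1 i2, Function.update v i a i1 = Function.update v i a i2 ↔
      Function.update v' i a' i1 = Function.update v' i a' i2 := by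
  intro i1 i2
  by_cases h1 : i1 = i
  · by_cases h2 : i2 = i
    · rw [h1, h2]; simp
    · rw [h1]
      simp only [Function.update_self, Function.update_of_ne h2]
      exact hfresh i2 h2
  · by_cases h2 : i2 = i
    · rw [h2]
      simp only [Function.update_self, Function.update_of_ne h1]
      rw [eq_comm, @eq_comm _ (v' i1)]
      exact hfresh i1 h1
    · simp only [Function.update_of_ne h1, Function.update_of_ne h2]
      exact heq i1 i2

/-- A fresh clique vertex exists on the `s'` side, since cliques have size
at least `k` and at most `k - 1` variables (other than `i`) are in play. -/
lemma exists_fresh {w : Fin t → V} {s' : Fin t → ℕ} {k : ℕ}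
    (hks' : ∀ j, k ≤ s' j) (v' : Fin k → MB V w s') (i : Fin k) (j0 : Fin t) :
    ∃ q' : Fin (s' j0), ∀ i2, i2 ≠ i → v' i2 ≠ Sum.inr ⟨j0, q'⟩ := by
  by_contra h
  push_neg at h
  choose g hg1 hg2 using h
  have hginj : Function.Injective (fun q' : Fin (s' j0) =>
      (⟨g q', hg1 q'⟩ : {i2 : Fin k // i2 ≠ i})) := by
    intro a b hab
    have : v' (g a) = v' (g b) := by
      simp only [Subtype.mk.injEq] at hab
      rw [hab]
    rw [hg2 a, hg2 b] at this
    simpa using this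
  have hcard := Fintype.card_le_of_injective _ hginj
  have h1 : Fintype.card {i2 : Fin k // i2 ≠ i} = k - 1 := by
    have := Fintype.card_subtype_compl (fun i2 : Fin k => i2 = i)
    simpa using this
  rw [Fintype.card_fin, h1] at hcard
  have hik : 0 < k := i.pos
  have := hks' j0
  omega

/-- One direction of the multi-clique replacement lemma, for a general pair of
corresponding assignments. -/
lemma key {k : ℕ} (E : V → V → Prop) (w : Fin t → V) (φ : GFml k) :
    ∀ (s s' : Fin t → ℕ), (∀ j, k ≤ s j) → (∀ j, k ≤ s' j) →
    ∀ (v : Fin k → MB V w s) (v' : Fin k → MB V w s'),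
    (∀ i1 i2, v i1 = v i2 ↔ v' i1 = v' i2) → (∀ i, MCorr (v i) (v' i)) →
    GFml.Sat (mblowup E w s) φ v → GFml.Sat (mblowup E w s') φ v' := by
  induction φ with
  | eq i j =>
    intro s s' hks hks' v v' heq hcorr hsat
    exact (heq i j).mp hsat
  | edge i j =>
    intro s s' hks hks' v v' heq hcorr hsat
    have ci := hcorr i
    have cj := hcorr j
    simp only [GFml.Sat] at hsat ⊢
    rcases hvi : v i with x | q <;>
      rcases hvj : v j with y | q2 <;>
      rcases hvi' : v' i with x' | p <;>
      rcases hvj' : v' j with y' | p2 <;>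
      rw [hvi, hvj] at hsat <;> rw [hvi, hvi'] at ci <;>
      rw [hvj, hvj'] at cj <;> simp only [MCorr] at ci cj
    · subst ci; subst cj; exact hsat
    · subst ci
      simp only [mblowup] at hsat ⊢
      rwa [← cj]
    · subst cj
      simp only [mblowup] at hsat ⊢
      rwa [← ci]
    · simp only [mblowup] at hsat ⊢
      by_cases hjj : q.1 = q2.1
      · rw [if_pos hjj] at hsat
        rw [if_pos (by rw [← ci, ← cj]; exact hjj)]
        intro hpp
        apply hsat
        have hvv : v' i = v' j := by rw [hvi', hvj', hpp]
        have := (heq i j).mpr hvv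
        rw [hvi, hvj] at this
        exact Sum.inr.inj this
      · rw [if_neg hjj] at hsat
        rw [if_neg (fun h => hjj ((ci.trans h).trans cj.symm)), ← ci, ← cj]
        exact hsat
  | not φ ih =>
    intro s s' hks hks' v v' heq hcorr hsat
    intro hsat'
    exact hsat (ih s' s hks' hks v' v (fun i1 i2 => (heq i1 i2).symm)
      (fun i => mcorr_symm (hcorr i)) hsat')
  | and φ ψ ihφ ihψ =>
    intro s s' hks hks' v v' heq hcorr hsat
    exact ⟨ihφ s s' hks hks' v v' heq hcorr hsat.1,
      ihψ s s' hks hks' v v' heq hcorr hsat.2⟩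
  | ex i φ ih =>
    intro s s' hks hks' v v' heq hcorr hsat
    obtain ⟨a, ha⟩ := hsat
    -- find a corresponding witness a'
    have : ∃ a' : MB V w s', MCorr a a' ∧
        ∀ i2, i2 ≠ i → (a = v i2 ↔ a' = v' i2) := by
      by_cases hex : ∃ i0, i0 ≠ i ∧ v i0 = a
      · obtain ⟨i0, hi0, hvi0⟩ := hex
        refine ⟨v' i0, by rw [← hvi0]; exact hcorr i0, fun i2 _ => ?_⟩
        rw [← hvi0]
        exact heq i0 i2
      · push_neg at hex
        rcases a with x | ⟨j0, q⟩
        · refine ⟨Sum.inl x, by simp [MCorr], fun i2 h2 => ?_⟩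
          constructor
          · intro h; exact absurd h.symm (hex i2 h2)
          · intro h
            exfalso
            have hc := hcorr i2
            rw [← h] at hc
            rcases hv2 : v i2 with y | p <;> rw [hv2] at hc <;>
              simp only [MCorr] at hc
            exact hex i2 h2 (by rw [hv2, hc])
        · obtain ⟨q', hq'⟩ := exists_fresh hks' v' i j0
          refine ⟨Sum.inr ⟨j0, q'⟩, by simp [MCorr], fun i2 h2 => ?_⟩
          constructor
          · intro h; exact absurd h.symm (hex i2 h2)
          · intro h; exact absurd h.symm (hq' i2 h2)
    obtain ⟨a', ha1, ha2⟩ := this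
    exact ⟨a', ih s s' hks hks' _ _ (eqpat_update heq i ha2)
      (mcorr_update hcorr i ha1) ha⟩

end Aux

/-- If `k ≤ s j` and `k ≤ s' j` for every `j`, then every `k`-variable
first-order formula evaluated at parameters not among the `w j` (common to
`F_s` and `F_{s'}`) has the same truth value in `F_s` and in `F_{s'}`. -/
theorem multi_clique_replacement {V : Type} [Fintype V] (E : V → V → Prop)
    (t : ℕ) (w : Fin t → V) (hw : Function.Injective w)
    (s s' : Fin t → ℕ) (hs0 : ∀ j, 0 < s j) (hs'0 : ∀ j, 0 < s' j)
    (k : ℕ) (hks : ∀ j, k ≤ s j) (hks' : ∀ j, k ≤ s' j) :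
    ∀ (φ : GFml k) (w0 : Fin k → {x : V // ∀ j, x ≠ w j}),
      GFml.Sat (mblowup E w s) φ (fun i => Sum.inl (w0 i)) ↔
        GFml.Sat (mblowup E w s') φ (fun i => Sum.inl (w0 i)) := by
  intro φ w0
  have heq : ∀ i1 i2 : Fin k, (Sum.inl (w0 i1) : MB V w s) = Sum.inl (w0 i2) ↔
      (Sum.inl (w0 i1) : MB V w s') = Sum.inl (w0 i2) := by
    intro i1 i2; simp
  constructor
  · exact key E w φ s s' hks hks' _ _ heq (fun i => by simp [MCorr])
  · exact key E w φ s' s hks' hks _ _ (fun i1 i2 => (heq i1 i2).symm)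
      (fun i => by simp [MCorr])
end

section
/- If k′ > k ≥ 3 and E is a k′-good envelope for a hypergraph H, then E is a k-good envelope for H. -/
/-! STATEMENT 9.  A k'-good envelope is k-good for k < k'. -/

namespace McColm

/-- A (finite) hypergraph: a finite set of nodes together with a set of
hyperedges, each hyperedge being a multiset of nodes. -/
structure Hypergraph (α : Type) where
  nodes : Finset α
  edges : Set (Multiset α)
  edges_sub : ∀ e ∈ edges, ∀ a ∈ e, a ∈ nodes

/-- A finite structure with one binary relation `P`, together with a
projection function (the data of an envelope). -/
structure PStruct (α : Type) where
  carrier : Finset α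
  P : α → α → Prop
  proj : α → α

variable {α : Type}

/-- The vertices of an envelope: the elements of `|E| − |H|`. -/
def verts (H : Hypergraph α) (E : PStruct α) : Set α :=
  (E.carrier : Set α) \ (H.nodes : Set α)

/-- `E` is an envelope for `H`:  `|H| ⊆ |E|` and `P` is the identity on `|H|`;
`P` only relates elements of `|E|`; `P` is irreflexive and symmetric on the
vertices `|E| − |H|`; every vertex is `P`-related to a unique node, its
projection `F x = E.proj x`; and no node is `P`-related to a vertex. -/
def IsEnvelope (H : Hypergraph α) (E : PStruct α) : Prop :=
  (H.nodes ⊆ E.carrier) ∧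
  (∀ x y, E.P x y → x ∈ E.carrier ∧ y ∈ E.carrier) ∧
  (∀ a ∈ H.nodes, ∀ b ∈ H.nodes, (E.P a b ↔ a = b)) ∧
  (∀ x ∈ verts H E, ¬ E.P x x) ∧
  (∀ x ∈ verts H E, ∀ y ∈ verts H E, E.P x y → E.P y x) ∧
  (∀ x ∈ verts H E, E.proj x ∈ H.nodes ∧ E.P x (E.proj x) ∧
      ∀ a ∈ H.nodes, E.P x a → a = E.proj x) ∧
  (∀ a ∈ H.nodes, ∀ x ∈ verts H E, ¬ E.P a x)

/-- Adjacency in the graph `G_E` formed by `P` on the vertices. -/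
def Adj (H : Hypergraph α) (E : PStruct α) (x y : α) : Prop :=
  x ∈ verts H E ∧ y ∈ verts H E ∧ x ≠ y ∧ E.P x y

/-- A `k`-clique: a clique `X` of `G_E` with `F(X) ∈ HE(H)` and `|X| < k`. -/
def IsKClique (H : Hypergraph α) (E : PStruct α) (k : ℕ) (X : Finset α) : Prop :=
  (↑X ⊆ verts H E) ∧ (∀ x ∈ X, ∀ y ∈ X, x ≠ y → E.P x y) ∧
  (X.val.map E.proj ∈ H.edges) ∧ X.card < k

/-- A `k`-plebeian vertex: one belonging to no `k`-clique. -/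
def Plebeian (H : Hypergraph α) (E : PStruct α) (k : ℕ) (x : α) : Prop :=
  x ∈ verts H E ∧ ∀ X : Finset α, IsKClique H E k X → x ∉ X

/-- The `k`-closure `C_k(X)`: the union of `X` with all `k`-cliques
intersecting `X`. -/
def Ck (H : Hypergraph α) (E : PStruct α) (k : ℕ) (X : Set α) : Set α :=
  X ∪ {y | ∃ C : Finset α, IsKClique H E k C ∧ (∃ z ∈ C, z ∈ X) ∧ y ∈ C}

/-- Condition (G0): all `k`-cliques are pairwise disjoint. -/
def G0cond (H : Hypergraph α) (E : PStruct α) (k : ℕ) : Prop :=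
  ∀ C D : Finset α, IsKClique H E k C → IsKClique H E k D → C ≠ D → Disjoint C D

/-- Condition (G1): for every `X ⊆ |E|` with `|X| < k`, every node `a` and
every `Y ⊆ C_k(X)` including no `k`-clique, there is a `k`-plebeian vertex
`z ∈ F⁻¹(a) − X` adjacent in `G_E` to every vertex of `Y` and to no vertex of
`C_k(X) − Y`. -/
def G1cond (H : Hypergraph α) (E : PStruct α) (k : ℕ) : Prop :=
  ∀ X : Finset α, ↑X ⊆ (E.carrier : Set α) → X.card < k →
    ∀ a ∈ H.nodes, ∀ Y : Set α, Y ⊆ Ck H E k ↑X →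
      (∀ C : Finset α, IsKClique H E k C → ¬ (↑C ⊆ Y)) →
      ∃ z, Plebeian H E k z ∧ E.proj z = a ∧ z ∉ X ∧
        (∀ y ∈ Y, y ∈ verts H E → Adj H E z y) ∧
        (∀ y ∈ Ck H E k ↑X, y ∈ verts H E → y ∉ Y → ¬ Adj H E z y)

/-- Condition (G2): for every `X ⊆ |E|` with `|X| < k`, every tuple
`(a₁,…,a_l)` of nodes with `l < k` whose multiset is a hyperedge, and every
admissible adjacency pattern `R ⊆ C_k(X) × {1,…,l}` (no element of `C_k(X)` is
`R`-related to all indices, and no index is `R`-related to all vertices of a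
`k`-clique contained in `C_k(X)`), there are distinct vertices `y₁,…,y_l`
forming a clique disjoint from `X`, with `F(y_m) = a_m` and realizing exactly
the pattern `R` on `C_k(X)`. -/
def G2cond (H : Hypergraph α) (E : PStruct α) (k : ℕ) : Prop :=
  ∀ X : Finset α, ↑X ⊆ (E.carrier : Set α) → X.card < k →
    ∀ l : ℕ, l < k → ∀ a : Fin l → α, (∀ m, a m ∈ H.nodes) →
      (↑(List.ofFn a) : Multiset α) ∈ H.edges →
      ∀ R : Set (α × Fin l), (∀ p ∈ R, p.1 ∈ Ck H E k ↑X) →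
        (∀ x ∈ Ck H E k ↑X, ¬ ∀ m : Fin l, (x, m) ∈ R) →
        (∀ m : Fin l, ∀ C : Finset α, IsKClique H E k C → ↑C ⊆ Ck H E k ↑X →
          ¬ ∀ y ∈ C, (y, m) ∈ R) →
        ∃ y : Fin l → α, Function.Injective y ∧ (∀ m, y m ∈ verts H E) ∧
          (∀ m, E.proj (y m) = a m) ∧
          (∀ m m' : Fin l, m ≠ m' → E.P (y m) (y m')) ∧
          (∀ m, y m ∉ X) ∧
          (∀ x ∈ Ck H E k ↑X, ∀ m : Fin l, (E.P x (y m) ↔ (x, m) ∈ R))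

/-- `E` is a `k`-good envelope for `H`. -/
def KGoodEnvelope (H : Hypergraph α) (k : ℕ) (E : PStruct α) : Prop :=
  IsEnvelope H E ∧ G0cond H E k ∧ G1cond H E k ∧ G2cond H E k

end McColm

namespace McColm

variable {α : Type}

lemma clique_mono {H : Hypergraph α} {E : PStruct α} {k k' : ℕ} (hkk' : k ≤ k')
    {C : Finset α} (hC : IsKClique H E k C) : IsKClique H E k' C :=
  ⟨hC.1, hC.2.1, hC.2.2.1, lt_of_lt_of_le hC.2.2.2 hkk'⟩

lemma Ck_mono {H : Hypergraph α} {E : PStruct α} {k k' : ℕ} (hkk' : k ≤ k')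
    {X : Set α} : Ck H E k X ⊆ Ck H E k' X := by
  rintro y (hy | ⟨C, hC, hz, hyC⟩)
  · exact Or.inl hy
  · exact Or.inr ⟨C, clique_mono hkk' hC, hz, hyC⟩

lemma pleb_mono {H : Hypergraph α} {E : PStruct α} {k k' : ℕ} (hkk' : k ≤ k')
    {z : α} (hz : Plebeian H E k' z) : Plebeian H E k z :=
  ⟨hz.1, fun X hX => hz.2 X (clique_mono hkk' hX)⟩

/-- Key lemma: a `k'`-clique contained in `C_k(X)` with `|X| < k` is a `k`-clique. -/
lemma key {H : Hypergraph α} {E : PStruct α} {k k' : ℕ} (hkk' : k < k')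
    (hG0 : G0cond H E k') {X : Finset α} (hX : X.card < k) {C : Finset α}
    (hC : IsKClique H E k' C) (hsub : ↑C ⊆ Ck H E k ↑X) : IsKClique H E k C := by
  refine ⟨hC.1, hC.2.1, hC.2.2.1, ?_⟩
  by_contra hcard
  push_neg at hcard
  by_cases hXC : ∀ y ∈ C, y ∈ X
  · have : C ⊆ X := fun y hy => hXC y hy
    exact absurd (Finset.card_le_card this) (by omega)
  · push_neg at hXC
    obtain ⟨y, hyC, hyX⟩ := hXC
    rcases hsub hyC with hy | ⟨D, hD, _, hyD⟩
    · exact hyX hy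
    · have hD' := clique_mono (le_of_lt hkk') hD
      by_cases hCD : C = D
      · subst hCD; exact absurd hD.2.2.2 (by omega)
      · exact absurd (hG0 C D hC hD' hCD) (fun h => (Finset.disjoint_left.mp h hyC) hyD)

end McColm

/-- If `k' > k ≥ 3` and `E` is a `k'`-good envelope for `H`, then `E` is a
`k`-good envelope for `H`. -/
theorem kGood_of_kGood_gt {α : Type} (H : McColm.Hypergraph α)
    (k k' : ℕ) (hk : 3 ≤ k) (hkk' : k < k') (E : McColm.PStruct α)
    (hE : McColm.KGoodEnvelope H k' E) :
    McColm.KGoodEnvelope H k E := by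
  obtain ⟨henv, hG0, hG1, hG2⟩ := hE
  have hle : k ≤ k' := le_of_lt hkk'
  refine ⟨henv, ?_, ?_, ?_⟩
  · -- G0
    intro C D hC hD hCD
    exact hG0 C D (McColm.clique_mono hle hC) (McColm.clique_mono hle hD) hCD
  · -- G1
    intro X hXE hXcard a ha Y hY hnoClique
    have hY' : Y ⊆ McColm.Ck H E k' ↑X := fun y hy => McColm.Ck_mono hle (hY hy)
    have hnoClique' : ∀ C : Finset α, McColm.IsKClique H E k' C → ¬ (↑C ⊆ Y) := by
      intro C hC hsub
      exact hnoClique C (McColm.key hkk' hG0 hXcard hC (fun y hy => hY (hsub hy))) hsub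
    obtain ⟨z, hzpleb, hzproj, hzX, hadj, hnadj⟩ :=
      hG1 X hXE (lt_trans hXcard hkk') a ha Y hY' hnoClique'
    exact ⟨z, McColm.pleb_mono hle hzpleb, hzproj, hzX, hadj,
      fun y hy hv hyY => hnadj y (McColm.Ck_mono hle hy) hv hyY⟩
  · -- G2
    intro X hXE hXcard l hl a ha hedge R hR1 hR2 hR3
    rcases Nat.eq_zero_or_pos l with rfl | hlpos
    · exact ⟨Fin.elim0, fun m => m.elim0, fun m => m.elim0, fun m => m.elim0,
        fun m m' => m.elim0, fun m => m.elim0, fun x _ m => m.elim0⟩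
    · have hR1' : ∀ p ∈ R, p.1 ∈ McColm.Ck H E k' ↑X :=
        fun p hp => McColm.Ck_mono hle (hR1 p hp)
      have hR2' : ∀ x ∈ McColm.Ck H E k' ↑X, ¬ ∀ m : Fin l, (x, m) ∈ R := by
        intro x hx hall
        by_cases hxk : x ∈ McColm.Ck H E k ↑X
        · exact hR2 x hxk hall
        · exact hxk (hR1 (x, ⟨0, hlpos⟩) (hall ⟨0, hlpos⟩))
      have hR3' : ∀ m : Fin l, ∀ C : Finset α, McColm.IsKClique H E k' C →
          ↑C ⊆ McColm.Ck H E k' ↑X → ¬ ∀ y ∈ C, (y, m) ∈ R := by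
        intro m C hC _ hall
        have hsub : ↑C ⊆ McColm.Ck H E k ↑X :=
          fun y hy => hR1 (y, m) (hall y hy)
        exact hR3 m C (McColm.key hkk' hG0 hXcard hC hsub) hsub hall
      obtain ⟨y, hinj, hverts, hproj, hP, hnX, hpat⟩ :=
        hG2 X hXE (lt_trans hXcard hkk') l (lt_trans hl hkk') a ha hedge R hR1' hR2' hR3'
      exact ⟨y, hinj, hverts, hproj, hP, hnX,
        fun x hx m => hpat x (McColm.Ck_mono hle hx) m⟩
end

section
/- Let E and E′ be k-good envelopes for a hypergraph H and let η be a k-nice partial isomorphism from E to E′, with η* a k-correct extension of η whose domain is C_k(Dom(η)). Then: (i) η* is k-nice; (ii) η⁻¹ is k-nice, and (η*)⁻¹ is a k-correct extension of η⁻¹ with domain C_k(Range(η)); (iii) Range(η*) = C_k(Range(η)); (iv) η* maps every k-clique contained in C_k(Dom(η)) bijectively onto a k-clique of the same size; and (v) distinct k-cliques contained in C_k(Dom(η)) are mapped by η* to distinct k-cliques. -/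
namespace McColm

variable {α : Type}

/-- The domain of a partial map represented as a set of pairs. -/
def PDom (r : Set (α × α)) : Set α := {x | ∃ y, (x, y) ∈ r}

/-- The range of a partial map represented as a set of pairs. -/
def PRan (r : Set (α × α)) : Set α := {y | ∃ x, (x, y) ∈ r}

/-- The inverse of a partial map represented as a set of pairs. -/
def PInv (r : Set (α × α)) : Set (α × α) := {p | (p.2, p.1) ∈ r}

/-- `r` is (the graph of) a partial isomorphism from the `{P}`-structure `E`
to the `{P}`-structure `E'`: a partial injective map between the carriers that
preserves and reflects `P`. -/
def IsPIso (E E' : PStruct α) (r : Set (α × α)) : Prop :=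
  (∀ p ∈ r, p.1 ∈ E.carrier ∧ p.2 ∈ E'.carrier) ∧
  (∀ p ∈ r, ∀ q ∈ r, (p.1 = q.1 ↔ p.2 = q.2)) ∧
  (∀ p ∈ r, ∀ q ∈ r, (E.P p.1 q.1 ↔ E'.P p.2 q.2))

/-- A partial isomorphism `η` from `E` to `E'` is `k`-correct if it fixes
nodes, maps vertices to vertices with the same projection, preserves and
reflects `k`-plebeianness, and maps members of `k`-cliques to members of
`k`-cliques with the same projection multiset. -/
def KCorrect (H : Hypergraph α) (E E' : PStruct α) (k : ℕ)
    (r : Set (α × α)) : Prop :=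
  IsPIso E E' r ∧
  (∀ p ∈ r, p.1 ∈ H.nodes → p.2 = p.1) ∧
  (∀ p ∈ r, p.1 ∈ verts H E → p.2 ∈ verts H E' ∧ E'.proj p.2 = E.proj p.1) ∧
  (∀ p ∈ r, (Plebeian H E k p.1 ↔ Plebeian H E' k p.2)) ∧
  (∀ p ∈ r, ∀ X : Finset α, IsKClique H E k X → p.1 ∈ X →
    ∃ X' : Finset α, IsKClique H E' k X' ∧ p.2 ∈ X' ∧
      X'.val.map E'.proj = X.val.map E.proj)

/-- A `k`-correct partial isomorphism is `k`-nice if it extends to a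
`k`-correct partial isomorphism whose domain is the `k`-closure of its
domain. -/
def KNice (H : Hypergraph α) (E E' : PStruct α) (k : ℕ)
    (r : Set (α × α)) : Prop :=
  KCorrect H E E' k r ∧
  ∃ s : Set (α × α), r ⊆ s ∧ KCorrect H E E' k s ∧ PDom s = Ck H E k (PDom r)

end McColm

namespace McColm

variable {α : Type} {H : Hypergraph α} {E E' : PStruct α} {k : ℕ}

lemma mem_verts {x : α} : x ∈ verts H E ↔ x ∈ E.carrier ∧ x ∉ H.nodes := by
  simp [verts]

lemma clique_subset_Ck {X : Set α} {C : Finset α} (hC : IsKClique H E k C)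
    (hmeet : ∃ z ∈ C, z ∈ X) : ↑C ⊆ Ck H E k X := fun y hy =>
  Or.inr ⟨C, hC, hmeet, hy⟩

lemma subset_Ck {X : Set α} : X ⊆ Ck H E k X := fun _ hy => Or.inl hy

lemma Ck_idem (g0 : G0cond H E k) (X : Set α) :
    Ck H E k (Ck H E k X) = Ck H E k X := by
  apply Set.Subset.antisymm
  · rintro y (hy | ⟨C, hC, ⟨z, hzC, hz⟩, hyC⟩)
    · exact hy
    · rcases hz with hz | ⟨D, hD, hmeet, hzD⟩
      · exact Or.inr ⟨C, hC, ⟨z, hzC, hz⟩, hyC⟩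
      · by_cases hCD : C = D
        · exact Or.inr ⟨D, hD, hmeet, hCD ▸ hyC⟩
        · exact absurd (g0 C D hC hD hCD)
            (fun h => (Finset.disjoint_left.mp h hzC) hzD)
  · exact subset_Ck

lemma not_plebeian_elim {x : α} (hx : x ∈ verts H E)
    (h : ¬ Plebeian H E k x) : ∃ X : Finset α, IsKClique H E k X ∧ x ∈ X := by
  by_contra hc
  push_neg at hc
  exact h ⟨hx, hc⟩

lemma KCorrect.pinv (hE'e : IsEnvelope H E') (g0' : G0cond H E' k)
    {t : Set (α × α)} (ht : KCorrect H E E' k t) :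
    KCorrect H E' E k (PInv t) := by
  obtain ⟨⟨hcar, hinj, hP⟩, hnode, hvert, hpleb, hclq⟩ := ht
  have key : ∀ p ∈ PInv t, p.1 ∈ verts H E' →
      p.2 ∈ verts H E ∧ E.proj p.2 = E'.proj p.1 := by
    rintro ⟨y, x⟩ hp hy
    have hxy : (x, y) ∈ t := hp
    have hx : x ∈ E.carrier := (hcar _ hxy).1
    by_cases hxn : x ∈ H.nodes
    · have hyx : y = x := hnode _ hxy hxn
      exact absurd (hyx ▸ hxn) (mem_verts.mp hy).2
    · have hxv : x ∈ verts H E := mem_verts.mpr ⟨hx, hxn⟩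
      obtain ⟨_, h2⟩ := hvert _ hxy hxv
      exact ⟨hxv, h2.symm⟩
  refine ⟨⟨?_, ?_, ?_⟩, ?_, key, ?_, ?_⟩
  · rintro ⟨y, x⟩ hp
    have hxy : (x, y) ∈ t := hp
    exact ⟨(hcar _ hxy).2, (hcar _ hxy).1⟩
  · rintro ⟨y, x⟩ hp ⟨y', x'⟩ hq
    have hxy : (x, y) ∈ t := hp
    have hxy' : (x', y') ∈ t := hq
    exact ⟨fun h => (hinj _ hxy _ hxy').mpr h, fun h => (hinj _ hxy _ hxy').mp h⟩
  · rintro ⟨y, x⟩ hp ⟨y', x'⟩ hq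
    have hxy : (x, y) ∈ t := hp
    have hxy' : (x', y') ∈ t := hq
    exact (hP _ hxy _ hxy').symm
  · rintro ⟨y, x⟩ hp hyn
    have hxy : (x, y) ∈ t := hp
    have hx : x ∈ E.carrier := (hcar _ hxy).1
    by_cases hxn : x ∈ H.nodes
    · exact (hnode _ hxy hxn).symm
    · have hxv : x ∈ verts H E := mem_verts.mpr ⟨hx, hxn⟩
      exact absurd hyn (mem_verts.mp (hvert _ hxy hxv).1).2
  · rintro ⟨y, x⟩ hp
    have hxy : (x, y) ∈ t := hp
    exact (hpleb _ hxy).symm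
  · rintro ⟨y, x⟩ hp X' hX' hyX'
    have hxy : (x, y) ∈ t := hp
    have hyv : y ∈ verts H E' := hX'.1 hyX'
    have hxv : x ∈ verts H E := (key (y, x) hp hyv).1
    have hnp : ¬ Plebeian H E k x := by
      intro hple
      exact ((hpleb _ hxy).mp hple).2 X' hX' hyX'
    obtain ⟨X, hX, hxX⟩ := not_plebeian_elim hxv hnp
    obtain ⟨X'', hX'', hyX'', hF⟩ := hclq _ hxy X hX hxX
    have hXX : X'' = X' := by
      by_contra hne
      exact (Finset.disjoint_left.mp (g0' X'' X' hX'' hX' hne) hyX'') hyX'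
    exact ⟨X, hX, hxX, by rw [← hF, hXX]⟩

lemma clique_image {t : Set (α × α)} (ht : KCorrect H E E' k t)
    {C : Finset α} (hC : IsKClique H E k C) (hsub : ∀ x ∈ C, x ∈ PDom t) :
    ∃ C' : Finset α, IsKClique H E' k C' ∧ C'.card = C.card ∧
      (∀ y, y ∈ C' ↔ ∃ x ∈ C, (x, y) ∈ t) := by
  classical
  obtain ⟨⟨hcar, hinj, hP⟩, hnode, hvert, hpleb, hclq⟩ := ht
  obtain ⟨hCverts, hCP, hCedge, hCcard⟩ := hC
  set f : α → α := fun x => if h : ∃ y, (x, y) ∈ t then h.choose else x with hf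
  have hft : ∀ x ∈ PDom t, (x, f x) ∈ t := by
    intro x hx
    have hx' : ∃ y, (x, y) ∈ t := hx
    simp only [hf]
    rw [dif_pos hx']
    exact hx'.choose_spec
  have hfun : ∀ {x y}, (x, y) ∈ t → x ∈ PDom t → y = f x := by
    intro x y hxy hx
    exact (hinj _ hxy _ (hft x hx)).mp rfl
  have hinjC : ∀ x ∈ C, ∀ y ∈ C, f x = f y → x = y := by
    intro x hx y hy hxy
    exact (hinj _ (hft x (hsub x hx)) _ (hft y (hsub y hy))).mpr hxy
  have hvC : ∀ x ∈ C, f x ∈ verts H E' ∧ E'.proj (f x) = E.proj x := by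
    intro x hx
    exact hvert _ (hft x (hsub x hx)) (hCverts hx)
  have hcardeq : (C.image f).card = C.card :=
    Finset.card_image_of_injOn (fun x hx y hy => hinjC x hx y hy)
  have hval : (C.image f).val = C.val.map f := by
    rw [Finset.image_val, Multiset.dedup_eq_self.mpr]
    exact C.nodup.map_on (fun x hx y hy => hinjC x hx y hy)
  have hmul : (C.image f).val.map E'.proj = C.val.map E.proj := by
    rw [hval, Multiset.map_map]
    exact Multiset.map_congr rfl (fun x hx => (hvC x hx).2)
  refine ⟨C.image f, ⟨?_, ?_, ?_, ?_⟩, hcardeq, ?_⟩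
  · intro y hy
    obtain ⟨x, hx, rfl⟩ := Finset.mem_image.mp hy
    exact (hvC x hx).1
  · intro y hy y' hy' hne
    obtain ⟨x, hx, rfl⟩ := Finset.mem_image.mp hy
    obtain ⟨x', hx', rfl⟩ := Finset.mem_image.mp hy'
    have hxx : x ≠ x' := fun h => hne (h ▸ rfl)
    exact (hP _ (hft x (hsub x hx)) _ (hft x' (hsub x' hx'))).mp
      (hCP x hx x' hx' hxx)
  · rw [hmul]; exact hCedge
  · rw [hcardeq]; exact hCcard
  · intro y
    constructor
    · intro hy
      obtain ⟨x, hx, rfl⟩ := Finset.mem_image.mp hy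
      exact ⟨x, hx, hft x (hsub x hx)⟩
    · rintro ⟨x, hx, hxy⟩
      have : y = f x := hfun hxy ⟨y, hxy⟩
      exact this ▸ Finset.mem_image_of_mem f hx

end McColm

/-- Let `E`, `E'` be `k`-good envelopes for `H`, `η` (represented by `r`) a
`k`-nice partial isomorphism from `E` to `E'`, and `η*` (represented by `s`) a
`k`-correct extension of `η` with domain `C_k(Dom η)`.  Then: (i) `η*` is
`k`-nice; (ii) `η⁻¹` is `k`-nice and `(η*)⁻¹` is a `k`-correct extension of
`η⁻¹` with domain `C_k(Range η)`; (iii) `Range η* = C_k(Range η)`;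
(iv) `η*` maps every `k`-clique contained in `C_k(Dom η)` onto a `k`-clique of
the same size; and (v) distinct such `k`-cliques map to distinct images. -/
theorem etaStar_lemma {α : Type} (H : McColm.Hypergraph α) (k : ℕ)
    (hk : 3 ≤ k) (E E' : McColm.PStruct α)
    (hE : McColm.KGoodEnvelope H k E) (hE' : McColm.KGoodEnvelope H k E')
    (r s : Set (α × α)) (hr : McColm.KNice H E E' k r)
    (hs : McColm.KCorrect H E E' k s) (hrs : r ⊆ s)
    (hdom : McColm.PDom s = McColm.Ck H E k (McColm.PDom r)) :
    McColm.KNice H E E' k s ∧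
    McColm.KNice H E' E k (McColm.PInv r) ∧
    (McColm.PInv r ⊆ McColm.PInv s ∧ McColm.KCorrect H E' E k (McColm.PInv s) ∧
      McColm.PDom (McColm.PInv s) = McColm.Ck H E' k (McColm.PRan r)) ∧
    McColm.PRan s = McColm.Ck H E' k (McColm.PRan r) ∧
    (∀ C : Finset α, McColm.IsKClique H E k C →
      ↑C ⊆ McColm.Ck H E k (McColm.PDom r) →
      ∃ C' : Finset α, McColm.IsKClique H E' k C' ∧ C'.card = C.card ∧
        (∀ y, y ∈ C' ↔ ∃ x ∈ C, (x, y) ∈ s)) ∧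
    (∀ C D : Finset α, McColm.IsKClique H E k C → McColm.IsKClique H E k D →
      ↑C ⊆ McColm.Ck H E k (McColm.PDom r) →
      ↑D ⊆ McColm.Ck H E k (McColm.PDom r) → C ≠ D →
      {y | ∃ x ∈ C, (x, y) ∈ s} ≠ {y | ∃ x ∈ D, (x, y) ∈ s}) := by
  classical
  obtain ⟨hEe, g0, -, -⟩ := hE
  obtain ⟨hE'e, g0', -, -⟩ := hE'
  obtain ⟨hrc, -⟩ := hr
  have hsinv : McColm.KCorrect H E' E k (McColm.PInv s) :=
    McColm.KCorrect.pinv hE'e g0' hs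
  have hrinv : McColm.KCorrect H E' E k (McColm.PInv r) :=
    McColm.KCorrect.pinv hE'e g0' hrc
  have himg : ∀ C : Finset α, McColm.IsKClique H E k C →
      ↑C ⊆ McColm.Ck H E k (McColm.PDom r) →
      ∃ C' : Finset α, McColm.IsKClique H E' k C' ∧ C'.card = C.card ∧
        (∀ y, y ∈ C' ↔ ∃ x ∈ C, (x, y) ∈ s) := by
    intro C hC hCsub
    exact McColm.clique_image hs hC (fun x hx => hdom ▸ hCsub hx)
  have hran : McColm.PRan s = McColm.Ck H E' k (McColm.PRan r) := by
    apply Set.Subset.antisymm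
    · rintro y ⟨x, hxy⟩
      have hx : x ∈ McColm.Ck H E k (McColm.PDom r) := hdom ▸ ⟨y, hxy⟩
      rcases hx with hx | ⟨C, hC, ⟨z, hzC, hz⟩, hxC⟩
      · obtain ⟨y', hxy'⟩ := hx
        have hyy : y' = y := (hs.1.2.1 _ (hrs hxy') _ hxy).mp rfl
        exact Or.inl ⟨x, hyy ▸ hxy'⟩
      · have hCsub : ↑C ⊆ McColm.Ck H E k (McColm.PDom r) :=
          McColm.clique_subset_Ck hC ⟨z, hzC, hz⟩
        obtain ⟨C', hC', -, hmem⟩ := himg C hC hCsub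
        obtain ⟨w, hzw⟩ := hz
        exact Or.inr ⟨C', hC', ⟨w, (hmem w).mpr ⟨z, hzC, hrs hzw⟩, ⟨z, hzw⟩⟩,
          (hmem y).mpr ⟨x, hxC, hxy⟩⟩
    · rintro y (hy | ⟨D', hD', ⟨w, hwD', z, hzw⟩, hyD'⟩)
      · obtain ⟨x, hxy⟩ := hy
        exact ⟨x, hrs hxy⟩
      · have hws : (z, w) ∈ s := hrs hzw
        have hwinv : ((w, z) : α × α) ∈ McColm.PInv s := hws
        obtain ⟨D, hD, hzD, -⟩ := hsinv.2.2.2.2 (w, z) hwinv D' hD' hwD'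
        have hDsub : ↑D ⊆ McColm.Ck H E k (McColm.PDom r) :=
          McColm.clique_subset_Ck hD ⟨z, hzD, ⟨w, hzw⟩⟩
        obtain ⟨D'', hD'', -, hmem⟩ := himg D hD hDsub
        have hwD'' : w ∈ D'' := (hmem w).mpr ⟨z, hzD, hws⟩
        have hDD : D'' = D' := by
          by_contra hne
          exact (Finset.disjoint_left.mp (g0' D'' D' hD'' hD' hne) hwD'') hwD'
        obtain ⟨x, hxD, hxy⟩ := (hmem y).mp (hDD ▸ hyD')
        exact ⟨x, hxy⟩
  refine ⟨⟨hs, s, le_refl s, hs, ?_⟩, ⟨hrinv, McColm.PInv s,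
    fun p hp => hrs hp, hsinv, hran⟩, ⟨fun p hp => hrs hp, hsinv, hran⟩,
    hran, himg, ?_⟩
  · rw [hdom, McColm.Ck_idem g0]
  · intro C D hC hD hCsub hDsub hne heq
    apply hne
    have key : ∀ (C D : Finset α), McColm.IsKClique H E k C →
        ↑C ⊆ McColm.Ck H E k (McColm.PDom r) →
        {y | ∃ x ∈ C, (x, y) ∈ s} = {y | ∃ x ∈ D, (x, y) ∈ s} →
        ∀ x ∈ C, x ∈ D := by
      intro C D hC hCsub heq x hx
      have hxs : x ∈ McColm.PDom s := hdom ▸ hCsub hx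
      obtain ⟨y, hxy⟩ := hxs
      have hy : y ∈ {y | ∃ x ∈ D, (x, y) ∈ s} := heq ▸ ⟨x, hx, hxy⟩
      obtain ⟨x', hx'D, hx'y⟩ := hy
      have hxx : x = x' := (hs.1.2.1 _ hxy _ hx'y).mpr rfl
      exact hxx ▸ hx'D
    exact Finset.Subset.antisymm (key C D hC hCsub heq)
      (key D C hD hDsub heq.symm)
end
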